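/- Let A be an abelian category and C a class of objects of A closed under images (for every morphism f : C₁ → C₂ with C₁, C₂ ∈ C, the image of f lies in C) and closed under extensions. Then C = T(C) ∩ F(C), where T(C) is the smallest torsion class containing C and F(C) is the smallest torsion-free class containing C. -/

import Mathlib

open CategoryTheory CategoryTheory.Limits

/-- A torsion class in an abelian category: a class of objects closed under
quotients (epimorphic images) and extensions. -/
def IsTorsionClass {C : Type*} [Category C] [Abelian C] (T : Set C) : Prop :=
  (∀ ⦃X Y : C⦄ (f : X ⟶ Y), Epi f → X ∈ T → Y ∈ T) ∧
  (∀ S : ShortComplex C, S.ShortExact → S.X₁ ∈ T → S.X₃ ∈ T → S.X₂ ∈ T)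

/-- A torsion-free class in an abelian category: a class of objects closed under
subobjects and extensions. -/
def IsTorsionFreeClass {C : Type*} [Category C] [Abelian C] (F : Set C) : Prop :=
  (∀ ⦃X Y : C⦄ (f : X ⟶ Y), Mono f → Y ∈ F → X ∈ F) ∧
  (∀ S : ShortComplex C, S.ShortExact → S.X₁ ∈ F → S.X₃ ∈ F → S.X₂ ∈ F)

/-- The smallest torsion class containing a class of objects. -/
def torsionClosure {C : Type*} [Category C] [Abelian C] (S : Set C) : Set C :=
  sInf {T : Set C | IsTorsionClass T ∧ S ⊆ T}

/-- The smallest torsion-free class containing a class of objects. -/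
def torsionFreeClosure {C : Type*} [Category C] [Abelian C] (S : Set C) : Set C :=
  sInf {F : Set C | IsTorsionFreeClass F ∧ S ⊆ F}

namespace Stmt18Aux

variable {C : Type*} [Category C] [Abelian C]

lemma isZero_of_epi {X Y : C} (f : X ⟶ Y) (hf : Epi f) (hX : IsZero X) : IsZero Y := by
  haveI := hf
  rw [IsZero.iff_id_eq_zero, ← cancel_epi f]
  exact hX.eq_of_src _ _

lemma isZero_of_mono {X Y : C} (f : X ⟶ Y) (hf : Mono f) (hY : IsZero Y) : IsZero X := by
  haveI := hf
  rw [IsZero.iff_id_eq_zero, ← cancel_mono f]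
  exact hY.eq_of_tgt _ _

def Quo (S : Set C) : Set C := {Y | ∃ X ∈ S, ∃ f : X ⟶ Y, Epi f}
def Subo (S : Set C) : Set C := {X | ∃ Y ∈ S, ∃ f : X ⟶ Y, Mono f}

lemma Quo.epi {S : Set C} {X Y : C} (h : X ∈ Quo S) (f : X ⟶ Y) (hf : Epi f) : Y ∈ Quo S := by
  obtain ⟨Z, hZ, g, hg⟩ := h
  haveI := hg; haveI := hf
  exact ⟨Z, hZ, g ≫ f, epi_comp g f⟩

lemma Subo.mono {S : Set C} {X Y : C} (h : Y ∈ Subo S) (f : X ⟶ Y) (hf : Mono f) : X ∈ Subo S := by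
  obtain ⟨Z, hZ, g, hg⟩ := h
  haveI := hg; haveI := hf
  exact ⟨Z, hZ, f ≫ g, mono_comp f g⟩

def FiltQ (S : Set C) : ℕ → Set C
  | 0 => {X | IsZero X}
  | m+1 => {X | ∃ T : ShortComplex C, T.ShortExact ∧ T.X₁ ∈ FiltQ S m ∧ T.X₃ ∈ Quo S ∧
      Nonempty (T.X₂ ≅ X)}

def FiltR (S : Set C) : ℕ → Set C
  | 0 => {X | IsZero X}
  | n+1 => {X | ∃ T : ShortComplex C, T.ShortExact ∧ T.X₁ ∈ Subo S ∧ T.X₃ ∈ FiltR S n ∧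
      Nonempty (T.X₂ ≅ X)}

lemma shortExact_kernel {X Z : C} (e : X ⟶ Z) (he : Epi e) :
    (ShortComplex.mk (kernel.ι e) e (kernel.condition e)).ShortExact := by
  haveI := he
  exact ShortComplex.ShortExact.mk'
    (ShortComplex.exact_of_f_is_kernel _ (kernelIsKernel e)) inferInstance inferInstance

lemma shortExact_cokernel {A X : C} (m : A ⟶ X) (hm : Mono m) :
    (ShortComplex.mk m (cokernel.π m) (cokernel.condition m)).ShortExact := by
  haveI := hm
  exact ShortComplex.ShortExact.mk'
    (ShortComplex.exact_of_g_is_cokernel _ (cokernelIsCokernel m)) inferInstance inferInstance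

lemma shortExact_of_iso₂ {T : ShortComplex C} (hT : T.ShortExact) {Y : C} (e : T.X₂ ≅ Y) :
    (ShortComplex.mk (T.f ≫ e.hom) (e.inv ≫ T.g)
      (by rw [Category.assoc, Iso.hom_inv_id_assoc, T.zero])).ShortExact := by
  refine ShortComplex.shortExact_of_iso ?_ hT
  exact ShortComplex.isoMk (Iso.refl _) e (Iso.refl _) (by simp) (by simp)


lemma filtQ_epi (S : Set C) : ∀ m, ∀ {X Y : C} (f : X ⟶ Y), Epi f → X ∈ FiltQ S m → Y ∈ FiltQ S m := by
  intro m
  induction m with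
  | zero =>
    intro X Y f hf hX
    exact isZero_of_epi f hf hX
  | succ m ih =>
    rintro X Y f hf ⟨T, hT, h1, h3, ⟨e⟩⟩
    haveI := hf
    have hp : Epi (e.hom ≫ f) := epi_comp _ _
    set k : T.X₁ ⟶ Y := T.f ≫ (e.hom ≫ f) with hk
    refine ⟨ShortComplex.mk (kernel.ι (cokernel.π k)) (cokernel.π k) (kernel.condition _),
      shortExact_kernel _ inferInstance, ?_, ?_, ⟨Iso.refl Y⟩⟩
    · exact ih (Abelian.factorThruImage k) inferInstance h1
    · obtain ⟨φ, hφ⟩ := CokernelCofork.IsColimit.desc' hT.gIsCokernel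
        ((e.hom ≫ f) ≫ cokernel.π k)
        (by rw [← Category.assoc, ← hk]; exact cokernel.condition k)
      simp only [Cofork.π_ofπ] at hφ
      have hφe : Epi φ := by
        have : Epi (T.g ≫ φ) := by
          rw [hφ]
          haveI : Epi ((e.hom ≫ f)) := hp
          exact epi_comp _ _
        exact epi_of_epi T.g φ
      exact Quo.epi h3 φ hφe

lemma filtR_mono (S : Set C) : ∀ n, ∀ {X Y : C} (f : Y ⟶ X), Mono f → X ∈ FiltR S n → Y ∈ FiltR S n := by
  intro n
  induction n with
  | zero =>
    intro X Y f hf hX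
    exact isZero_of_mono f hf hX
  | succ n ih =>
    rintro X Y f hf ⟨T, hT, h1, h3, ⟨e⟩⟩
    haveI := hf
    have hι : Mono (f ≫ e.inv) := mono_comp _ _
    set k : Y ⟶ T.X₃ := (f ≫ e.inv) ≫ T.g with hk
    refine ⟨ShortComplex.mk (kernel.ι k) (cokernel.π (kernel.ι k)) (cokernel.condition _),
      shortExact_cokernel _ inferInstance, ?_, ?_, ⟨Iso.refl Y⟩⟩
    · obtain ⟨ψ, hψ⟩ := KernelFork.IsLimit.lift' hT.fIsKernel
        (kernel.ι k ≫ (f ≫ e.inv)) (by rw [Category.assoc, ← hk]; exact kernel.condition k)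
      simp only [Fork.ι_ofι] at hψ
      have hψm : Mono ψ := by
        have : Mono (ψ ≫ T.f) := by
          rw [hψ]
          haveI : Mono (f ≫ e.inv) := hι
          exact mono_comp _ _
        exact mono_of_mono ψ T.f
      exact Subo.mono h1 ψ hψm
    · exact ih (Abelian.factorThruCoimage k) inferInstance h3

lemma filtQ_iso (S : Set C) (m : ℕ) {X Y : C} (e : X ≅ Y) (h : X ∈ FiltQ S m) : Y ∈ FiltQ S m :=
  filtQ_epi S m e.hom inferInstance h

lemma filtR_iso (S : Set C) (n : ℕ) {X Y : C} (e : X ≅ Y) (h : X ∈ FiltR S n) : Y ∈ FiltR S n :=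
  filtR_mono S n e.inv inferInstance h


lemma pullback_shortExact {T : ShortComplex C} (hT : T.ShortExact) {P : C} (c : P ⟶ T.X₃) :
    (ShortComplex.mk (pullback.lift T.f 0 (by rw [T.zero, zero_comp]))
      (pullback.snd T.g c) (by rw [pullback.lift_snd])).ShortExact := by
  haveI := hT.epi_g
  haveI := hT.mono_f
  haveI hm : Mono (pullback.lift T.f 0 (by rw [T.zero, zero_comp]) : T.X₁ ⟶ pullback T.g c) := by
    have : Mono ((pullback.lift T.f 0 (by rw [T.zero, zero_comp]) : T.X₁ ⟶ pullback T.g c) ≫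
        pullback.fst T.g c) := by
      rw [pullback.lift_fst]; infer_instance
    exact mono_of_mono _ (pullback.fst T.g c)
  refine ShortComplex.ShortExact.mk' ?_ hm inferInstance
  apply ShortComplex.exact_of_f_is_kernel
  apply KernelFork.IsLimit.ofι'
  intro A x hx
  obtain ⟨l, hl⟩ := KernelFork.IsLimit.lift' hT.fIsKernel (x ≫ pullback.fst T.g c)
    (by rw [Category.assoc, pullback.condition, ← Category.assoc, hx, zero_comp])
  simp only [Fork.ι_ofι] at hl
  refine ⟨l, ?_⟩
  apply pullback.hom_ext
  · dsimp only; rw [Category.assoc, pullback.lift_fst]; exact hl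
  · dsimp only at hx ⊢; rw [Category.assoc, pullback.lift_snd, comp_zero, hx]

lemma pushout_shortExact {T : ShortComplex C} (hT : T.ShortExact) {D : C} (d : T.X₁ ⟶ D) :
    (ShortComplex.mk (pushout.inr T.f d)
      (pushout.desc T.g 0 (by rw [T.zero, comp_zero])) (by rw [pushout.inr_desc])).ShortExact := by
  haveI := hT.epi_g
  haveI := hT.mono_f
  haveI he : Epi (pushout.desc T.g 0 (by rw [T.zero, comp_zero]) : pushout T.f d ⟶ T.X₃) := by
    have : Epi (pushout.inl T.f d ≫
        (pushout.desc T.g 0 (by rw [T.zero, comp_zero]) : pushout T.f d ⟶ T.X₃)) := by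
      rw [pushout.inl_desc]; infer_instance
    exact epi_of_epi (pushout.inl T.f d) _
  refine ShortComplex.ShortExact.mk' ?_ inferInstance he
  apply ShortComplex.exact_of_g_is_cokernel
  apply CokernelCofork.IsColimit.ofπ'
  intro A x hx
  obtain ⟨l, hl⟩ := CokernelCofork.IsColimit.desc' hT.gIsCokernel (pushout.inl T.f d ≫ x)
    (by rw [← Category.assoc, pushout.condition, Category.assoc, hx, comp_zero])
  simp only [Cofork.π_ofπ] at hl
  refine ⟨l, ?_⟩
  apply pushout.hom_ext
  · rw [pushout.inl_desc_assoc]; exact hl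
  · dsimp only at hx ⊢; rw [pushout.inr_desc_assoc, zero_comp, hx]


lemma filtQ_ext (S : Set C) : ∀ b a (T : ShortComplex C), T.ShortExact →
    T.X₁ ∈ FiltQ S a → T.X₃ ∈ FiltQ S b → T.X₂ ∈ FiltQ S (a + b) := by
  intro b
  induction b with
  | zero =>
    intro a T hT h1 h3
    have hg : T.g = 0 := h3.eq_of_tgt _ _
    exact filtQ_epi S a T.f (hT.exact.epi_f hg) h1
  | succ b ih =>
    intro a T hT h1 h3
    obtain ⟨U, hU, hU1, hU3, ⟨e⟩⟩ := h3
    have hU' := shortExact_of_iso₂ hU e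
    set v : T.X₃ ⟶ U.X₃ := e.inv ≫ U.g with hv
    haveI hve : Epi v := hU'.epi_g
    haveI := hT.epi_g
    haveI hwe : Epi (T.g ≫ v) := epi_comp _ _
    refine ⟨ShortComplex.mk (kernel.ι (T.g ≫ v)) (T.g ≫ v) (kernel.condition _),
      shortExact_kernel _ inferInstance, ?_, ?_, ⟨Iso.refl _⟩⟩
    · -- kernel (T.g ≫ v) ∈ FiltQ S (a + b)
      have hkv : kernel v ∈ FiltQ S b := by
        refine filtQ_iso S b ?_ hU1
        exact (IsLimit.conePointUniqueUpToIso (kernelIsKernel v) hU'.fIsKernel).symm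
      have hP : pullback T.g (kernel.ι v) ∈ FiltQ S (a + b) :=
        ih a _ (pullback_shortExact hT (kernel.ι v)) h1 hkv
      refine filtQ_iso S (a + b) ?_ hP
      refine ⟨kernel.lift (T.g ≫ v) (pullback.fst T.g (kernel.ι v))
          (by rw [← Category.assoc, pullback.condition, Category.assoc, kernel.condition,
            comp_zero]),
        pullback.lift (kernel.ι (T.g ≫ v))
          (kernel.lift v (kernel.ι (T.g ≫ v) ≫ T.g)
            (by rw [Category.assoc]; exact kernel.condition _))
          (by rw [kernel.lift_ι]), ?_, ?_⟩
      · apply pullback.hom_ext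
        · simp only [Category.assoc, Category.id_comp]
          rw [pullback.lift_fst, kernel.lift_ι]
        · rw [← cancel_mono (kernel.ι v)]
          simp only [Category.assoc, Category.id_comp]
          rw [pullback.lift_snd_assoc, kernel.lift_ι, kernel.lift_ι_assoc, pullback.condition]
      · rw [← cancel_mono (kernel.ι (T.g ≫ v))]
        simp
        rw [pullback.lift_fst]
    · exact hU3

lemma filtR_ext (S : Set C) : ∀ a b (T : ShortComplex C), T.ShortExact →
    T.X₁ ∈ FiltR S a → T.X₃ ∈ FiltR S b → T.X₂ ∈ FiltR S (a + b) := by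
  intro a
  induction a with
  | zero =>
    intro b T hT h1 h3
    have hf : T.f = 0 := h1.eq_of_src _ _
    rw [Nat.zero_add]
    exact filtR_mono S b T.g (hT.exact.mono_g hf) h3
  | succ a ih =>
    intro b T hT h1 h3
    obtain ⟨U, hU, hU1, hU3, ⟨e⟩⟩ := h1
    have hU' := shortExact_of_iso₂ hU e
    set u : U.X₁ ⟶ T.X₁ := U.f ≫ e.hom with hu
    haveI hum : Mono u := hU'.mono_f
    haveI := hT.mono_f
    haveI hmm : Mono (u ≫ T.f) := mono_comp _ _
    have hab : a + 1 + b = (a + b) + 1 := by omega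
    rw [hab]
    refine ⟨ShortComplex.mk (u ≫ T.f) (cokernel.π (u ≫ T.f)) (cokernel.condition _),
      shortExact_cokernel _ inferInstance, hU1, ?_, ⟨Iso.refl _⟩⟩
    -- cokernel (u ≫ T.f) ∈ FiltR S (a + b)
    have hcu : cokernel u ∈ FiltR S a := by
      refine filtR_iso S a ?_ hU3
      exact (IsColimit.coconePointUniqueUpToIso (cokernelIsCokernel u) hU'.gIsCokernel).symm
    have hP : pushout T.f (cokernel.π u) ∈ FiltR S (a + b) :=
      ih b _ (pushout_shortExact hT (cokernel.π u)) hcu h3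
    refine filtR_iso S (a + b) ?_ hP
    refine Iso.symm ⟨cokernel.desc (u ≫ T.f) (pushout.inl T.f (cokernel.π u))
        (by rw [Category.assoc, pushout.condition, ← Category.assoc, cokernel.condition,
          zero_comp]),
      pushout.desc (cokernel.π (u ≫ T.f))
        (cokernel.desc u (T.f ≫ cokernel.π (u ≫ T.f))
          (by rw [← Category.assoc]; exact cokernel.condition _))
        (by rw [cokernel.π_desc]), ?_, ?_⟩
    · rw [← cancel_epi (cokernel.π (u ≫ T.f))]
      simp
      rw [pushout.inl_desc]
    · apply pushout.hom_ext
      · rw [pushout.inl_desc_assoc, cokernel.π_desc, Category.comp_id]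
      · rw [← cancel_epi (cokernel.π u)]
        rw [pushout.inr_desc_assoc, cokernel.π_desc_assoc, Category.assoc, cokernel.π_desc,
          pushout.condition, Category.comp_id]


lemma zero_mem {S : Set C} (hiso : ∀ ⦃X Y : C⦄, (X ≅ Y) → X ∈ S → Y ∈ S)
    (himg : ∀ ⦃X Y : C⦄ (f : X ⟶ Y), X ∈ S → Y ∈ S → image f ∈ S)
    (hS : S.Nonempty) {X : C} (hX : IsZero X) : X ∈ S := by
  obtain ⟨C₀, hC₀⟩ := hS
  have h0 : image (0 : C₀ ⟶ C₀) ∈ S := himg 0 hC₀ hC₀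
  have hz : IsZero (image (0 : C₀ ⟶ C₀)) := by
    have hι : image.ι (0 : C₀ ⟶ C₀) = 0 := by
      rw [← cancel_epi (factorThruImage (0 : C₀ ⟶ C₀))]
      simp
    rw [IsZero.iff_id_eq_zero, ← cancel_mono (image.ι (0 : C₀ ⟶ C₀))]
    simp [hι]
  exact hiso (hz.iso hX) h0

def FiltQall (S : Set C) : Set C := {X | ∃ m, X ∈ FiltQ S m}
def FiltRall (S : Set C) : Set C := {X | ∃ n, X ∈ FiltR S n}

lemma filtQall_torsion (S : Set C) : IsTorsionClass (FiltQall S) := by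
  constructor
  · rintro X Y f hf ⟨m, hm⟩
    exact ⟨m, filtQ_epi S m f hf hm⟩
  · rintro T hT ⟨m, h1⟩ ⟨k, h3⟩
    exact ⟨m + k, filtQ_ext S k m T hT h1 h3⟩

lemma filtRall_torsionFree (S : Set C) : IsTorsionFreeClass (FiltRall S) := by
  constructor
  · rintro X Y f hf ⟨n, hn⟩
    exact ⟨n, filtR_mono S n f hf hn⟩
  · rintro T hT ⟨m, h1⟩ ⟨k, h3⟩
    exact ⟨m + k, filtR_ext S m k T hT h1 h3⟩

lemma subset_filtQall (S : Set C) : S ⊆ FiltQall S := by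
  intro X hX
  refine ⟨1, ShortComplex.mk (kernel.ι (𝟙 X)) (𝟙 X) (kernel.condition _),
    shortExact_kernel _ inferInstance, ?_, ⟨X, hX, 𝟙 X, inferInstance⟩, ⟨Iso.refl X⟩⟩
  have hι : kernel.ι (𝟙 X) = 0 := by simpa using kernel.condition (𝟙 X)
  show IsZero (kernel (𝟙 X))
  rw [IsZero.iff_id_eq_zero, ← cancel_mono (kernel.ι (𝟙 X))]
  simp [hι]

lemma subset_filtRall (S : Set C) : S ⊆ FiltRall S := by
  intro X hX
  refine ⟨1, ShortComplex.mk (𝟙 X) (cokernel.π (𝟙 X)) (cokernel.condition _),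
    shortExact_cokernel _ inferInstance, ⟨X, hX, 𝟙 X, inferInstance⟩, ?_, ⟨Iso.refl X⟩⟩
  have hπ : cokernel.π (𝟙 X) = 0 := by
    rw [← Category.id_comp (cokernel.π (𝟙 X))]
    exact cokernel.condition (𝟙 X)
  show IsZero (cokernel (𝟙 X))
  rw [IsZero.iff_id_eq_zero, ← cancel_epi (cokernel.π (𝟙 X))]
  simp [hπ]

lemma main {S : Set C} (hiso : ∀ ⦃X Y : C⦄, (X ≅ Y) → X ∈ S → Y ∈ S)
    (himg : ∀ ⦃X Y : C⦄ (f : X ⟶ Y), X ∈ S → Y ∈ S → image f ∈ S)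
    (hext : ∀ Sc : ShortComplex C, Sc.ShortExact → Sc.X₁ ∈ S → Sc.X₃ ∈ S → Sc.X₂ ∈ S)
    (hS : S.Nonempty) :
    ∀ N m n (X : C), m + n ≤ N → X ∈ FiltQ S m → X ∈ FiltR S n → X ∈ S := by
  intro N
  induction N with
  | zero =>
    intro m n X h hm _
    have hm0 : m = 0 := by omega
    subst hm0
    exact zero_mem hiso himg hS hm
  | succ N ih =>
    intro m n X h hm hn
    cases m with
    | zero => exact zero_mem hiso himg hS hm
    | succ a =>
    cases n with
    | zero => exact zero_mem hiso himg hS hn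
    | succ b =>
    have hm' := hm
    have hn' := hn
    obtain ⟨T, hT, hA, hZ, ⟨eT⟩⟩ := hm'
    obtain ⟨U, hU, hB, hW, ⟨eU⟩⟩ := hn'
    have hT' := shortExact_of_iso₂ hT eT
    have hU' := shortExact_of_iso₂ hU eU
    -- step 1: T.X₁ ∈ S
    have hA_R : T.X₁ ∈ FiltR S (b + 1) :=
      filtR_mono S (b + 1) (T.f ≫ eT.hom) hT'.mono_f hn
    have hA_S : T.X₁ ∈ S := ih a (b + 1) T.X₁ (by omega) hA hA_R
    -- step 2: U.X₃ ∈ S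
    have hW_Q : U.X₃ ∈ FiltQ S (a + 1) :=
      filtQ_epi S (a + 1) (eU.inv ≫ U.g) hU'.epi_g hm
    have hW_S : U.X₃ ∈ S := ih (a + 1) b U.X₃ (by omega) hW_Q hW
    -- step 3: pullback along the epi from an S-object
    obtain ⟨Cz, hCz, c, hc⟩ := hZ
    haveI := hc
    have hPS : pullback (eT.inv ≫ T.g) c ∈ S :=
      hext _ (pullback_shortExact hT' c) hA_S hCz
    -- step 4: pushout along the mono into an S-object
    obtain ⟨D, hD, d, hd⟩ := hB
    haveI := hd
    have hQS : pushout (U.f ≫ eU.hom) d ∈ S :=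
      hext _ (pushout_shortExact hU' d) hD hW_S
    -- step 5: X is the image of pullback ⟶ pushout
    haveI : Epi (pullback.fst (eT.inv ≫ T.g) c) := by
      haveI := hT'.epi_g
      infer_instance
    haveI : Mono (pushout.inl (U.f ≫ eU.hom) d) := by
      haveI := hU'.mono_f
      infer_instance
    haveI : StrongEpi (pullback.fst (eT.inv ≫ T.g) c) := strongEpi_of_epi _
    have hkS : image (pullback.fst (eT.inv ≫ T.g) c ≫ pushout.inl (U.f ≫ eU.hom) d) ∈ S :=
      himg _ hPS hQS
    exact hiso
      (image.isoStrongEpiMono (pullback.fst (eT.inv ≫ T.g) c)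
        (pushout.inl (U.f ≫ eU.hom) d) rfl).symm hkS

end Stmt18Aux

open Stmt18Aux

lemma mem_sInf' {α : Type*} {s : Set (Set α)} {a : α} : a ∈ sInf s ↔ ∀ t ∈ s, a ∈ t := by
  rw [Set.sInf_eq_sInter]
  exact Set.mem_sInter


/-- a class of objects of an abelian category (closed under
isomorphisms) which is closed under images and extensions equals the intersection
of its torsion closure and its torsion-free closure. -/
theorem stmt_18 {C : Type*} [Category C] [Abelian C] (S : Set C)
    (hiso : ∀ ⦃X Y : C⦄, (X ≅ Y) → X ∈ S → Y ∈ S)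
    (himg : ∀ ⦃X Y : C⦄ (f : X ⟶ Y), X ∈ S → Y ∈ S → image f ∈ S)
    (hext : ∀ Sc : ShortComplex C, Sc.ShortExact → Sc.X₁ ∈ S → Sc.X₃ ∈ S → Sc.X₂ ∈ S) :
    S = torsionClosure S ∩ torsionFreeClosure S := by
  apply Set.Subset.antisymm
  · intro X hX
    exact ⟨mem_sInf'.2 fun T hT => hT.2 hX, mem_sInf'.2 fun F hF => hF.2 hX⟩
  · rintro X ⟨hT, hF⟩
    rcases Set.eq_empty_or_nonempty S with hSe | hS
    · exact absurd (mem_sInf'.1 hT ∅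
        ⟨⟨fun _ _ _ _ h => h.elim, fun _ _ h _ => h.elim⟩, hSe ▸ Set.Subset.rfl⟩)
        (Set.notMem_empty X)
    · obtain ⟨m, hm⟩ : X ∈ FiltQall S :=
        mem_sInf'.1 hT _ ⟨filtQall_torsion S, subset_filtQall S⟩
      obtain ⟨n, hn⟩ : X ∈ FiltRall S :=
        mem_sInf'.1 hF _ ⟨filtRall_torsionFree S, subset_filtRall S⟩
      exact main hiso himg hext hS (m + n) m n X le_rfl hm hn
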